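/- Let n be even and m a positive integer. Every maximizer r of d(r) = Σ_{i=1}^n r_i(2m − r_{i−1} − r_i) over the feasible region {r ∈ ℤ_{≥0}^n : r_i + r_{i+1} ≤ m for i = 0, ..., n} (with r_0 = r_{n+1} = 0) has even Betti numbers β_{2k} = m − r_{2k} − r_{2k+1} equal to ⌊m/(n/2+1)⌋ or ⌈m/(n/2+1)⌉ for every k = 0, 1, ..., n/2. -/

import Mathlib

open Finset

/-- Dimension of the variety of equal-dimension chain complexes with ranks `r`. -/
def Dm (n m : ℕ) (r : ℕ → ℕ) : ℤ :=
  ∑ i ∈ Icc 1 n, (r i : ℤ) * (2 * (m : ℤ) - r (i - 1) - r i)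

/-- Feasibility of the rank vector `r` (with conventions `r 0 = r (n+1) = 0`). -/
def feasm (n m : ℕ) (r : ℕ → ℕ) : Prop :=
  r 0 = 0 ∧ r (n + 1) = 0 ∧ ∀ i ≤ n, r i + r (i + 1) ≤ m

private lemma int_consec_nonneg (x : ℤ) : 0 ≤ x * (x - 1) := by
  rcases le_or_gt x 0 with h | h
  · nlinarith [sq_nonneg x]
  · exact mul_nonneg (by linarith) (by omega)

private lemma ident (m : ℤ) (r : ℕ → ℤ) :
    ∀ n : ℕ, 2 * (∑ i ∈ Icc 1 n, r i * (2 * m - r (i - 1) - r i))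
      + ∑ i ∈ range n, (m - r i - r (i + 1)) ^ 2
      = n * m ^ 2 + (m - r 0) ^ 2 - (m - r n) ^ 2 := by
  intro n
  induction n with
  | zero => simp
  | succ n ih =>
    rw [Finset.sum_Icc_succ_top (by omega), Finset.sum_range_succ]
    simp only [Nat.add_sub_cancel]
    push_cast
    linear_combination ih

private lemma split_par (f : ℕ → ℤ) (p : ℕ) :
    ∑ i ∈ range (2 * p + 1), f i
      = ∑ k ∈ range (p + 1), f (2 * k) + ∑ j ∈ range p, f (2 * j + 1) := by
  induction p with
  | zero => simp
  | succ p ih =>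
    have h : 2 * (p + 1) + 1 = (2 * p + 1) + 1 + 1 := by ring
    rw [h, sum_range_succ, sum_range_succ, ih,
      sum_range_succ (fun k => f (2 * k)) (p + 1),
      sum_range_succ (fun j => f (2 * j + 1)) p]
    have e1 : 2 * p + 1 + 1 = 2 * (p + 1) := by ring
    rw [e1]
    ring

private lemma pair_sum (r : ℕ → ℤ) (m : ℤ) (p : ℕ) :
    (∑ k ∈ range (p + 1), (m - r (2 * k) - r (2 * k + 1)))
      - ∑ j ∈ range p, (m - r (2 * j + 1) - r (2 * j + 2)) = m - r 0 - r (2 * p + 1) := by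
  induction p with
  | zero => simp
  | succ p ih =>
    rw [sum_range_succ (fun k => m - r (2 * k) - r (2 * k + 1)) (p + 1),
      sum_range_succ (fun j => m - r (2 * j + 1) - r (2 * j + 2)) p]
    simp only [show 2 * (p + 1) = 2 * p + 2 from by ring,
      show 2 * (p + 1) + 1 = 2 * p + 2 + 1 from by ring]
    linear_combination ih

private lemma Dm_split (m p : ℕ) (r : ℕ → ℕ) (h0 : r 0 = 0) (hN : r (2 * p + 1) = 0) :
    2 * Dm (2 * p) m r
      = (2 * p + 1) * (m : ℤ) ^ 2
        - ∑ k ∈ range (p + 1), ((m : ℤ) - r (2 * k) - r (2 * k + 1)) ^ 2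
        - ∑ j ∈ range p, ((m : ℤ) - r (2 * j + 1) - r (2 * j + 2)) ^ 2 := by
  have hid := ident (m : ℤ) (fun i => (r i : ℤ)) (2 * p)
  beta_reduce at hid
  have hsp := split_par (fun i => ((m : ℤ) - r i - r (i + 1)) ^ 2) p
  beta_reduce at hsp
  have hD : Dm (2 * p) m r = ∑ i ∈ Icc 1 (2 * p), (r i : ℤ) * (2 * m - r (i - 1) - r i) := rfl
  -- sum over range (2p+1) = sum over range (2p) + last term
  rw [sum_range_succ] at hsp
  have hodd : ∀ j, (2 : ℕ) * j + 1 + 1 = 2 * j + 2 := by intro j; ring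
  simp only [hodd] at hsp
  have hlast : ((m : ℤ) - r (2 * p) - r (2 * p + 1)) ^ 2 = ((m : ℤ) - r (2 * p)) ^ 2 := by
    rw [hN]; push_cast; ring
  rw [hD]
  rw [h0] at hid
  push_cast at hid hsp ⊢
  linarith [hid, hsp, hlast.symm]

private def Bc (m p k : ℕ) : ℕ := k * (m / (p + 1)) + min k (m % (p + 1))

private def rst (m p : ℕ) (i : ℕ) : ℕ :=
  if i % 2 = 0 then Bc m p (i / 2) else m - Bc m p ((i + 1) / 2)

private lemma Bc_mono (m p : ℕ) {k l : ℕ} (h : k ≤ l) : Bc m p k ≤ Bc m p l := by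
  unfold Bc
  have h1 : k * (m / (p + 1)) ≤ l * (m / (p + 1)) := Nat.mul_le_mul_right _ h
  have h2 : min k (m % (p + 1)) ≤ min l (m % (p + 1)) := by omega
  omega

private lemma Bc_top (m p : ℕ) : Bc m p (p + 1) = m := by
  unfold Bc
  have ht : m % (p + 1) < p + 1 := Nat.mod_lt _ (by omega)
  have := Nat.div_add_mod m (p + 1)
  have h1 : (p + 1) * (m / (p + 1)) = (m / (p + 1)) * (p + 1) := by ring
  have h2 : min (p + 1) (m % (p + 1)) = m % (p + 1) := by omega
  rw [h2]
  have h3 : (p + 1) * (m / (p + 1)) + m % (p + 1) = m := this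
  nlinarith [h3]

private lemma Bc_le (m p : ℕ) {k : ℕ} (h : k ≤ p + 1) : Bc m p k ≤ m := by
  calc Bc m p k ≤ Bc m p (p + 1) := Bc_mono m p h
  _ = m := Bc_top m p

private lemma rst_even (m p k : ℕ) : rst m p (2 * k) = Bc m p k := by
  unfold rst
  rw [if_pos (by omega)]
  congr 1
  omega

private lemma rst_odd (m p k : ℕ) : rst m p (2 * k + 1) = m - Bc m p (k + 1) := by
  unfold rst
  rw [if_neg (by omega), show (2 * k + 1 + 1) / 2 = k + 1 from by omega]

private lemma rst_feas (m p : ℕ) :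
    rst m p 0 = 0 ∧ rst m p (2 * p + 1) = 0 ∧ ∀ i ≤ 2 * p, rst m p i + rst m p (i + 1) ≤ m := by
  refine ⟨?_, ?_, ?_⟩
  · have := rst_even m p 0
    simpa [Bc] using this
  · rw [rst_odd m p p, Bc_top]
    omega
  · intro i hi
    rcases Nat.even_or_odd i with ⟨k, hk⟩ | ⟨k, hk⟩
    · have hk2 : i = 2 * k := by omega
      subst hk2
      rw [rst_even, show 2 * k + 1 = 2 * k + 1 from rfl, rst_odd]
      have h1 : Bc m p k ≤ Bc m p (k + 1) := Bc_mono m p (by omega)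
      have h2 : Bc m p (k + 1) ≤ m := Bc_le m p (by omega)
      omega
    · have hk2 : i = 2 * k + 1 := by omega
      subst hk2
      rw [rst_odd, show 2 * k + 1 + 1 = 2 * (k + 1) from by ring, rst_even]
      have h2 : Bc m p (k + 1) ≤ m := Bc_le m p (by omega)
      omega

private lemma rst_b (m p k : ℕ) (hk : k ≤ p) :
    (m : ℤ) - rst m p (2 * k) - rst m p (2 * k + 1) = (Bc m p (k + 1) : ℤ) - Bc m p k := by
  rw [rst_even, rst_odd]
  have h2 : Bc m p (k + 1) ≤ m := Bc_le m p (by omega)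
  push_cast [h2]
  ring

private lemma rst_o (m p j : ℕ) (hj : j < p) :
    (m : ℤ) - rst m p (2 * j + 1) - rst m p (2 * j + 2) = 0 := by
  rw [rst_odd, show 2 * j + 2 = 2 * (j + 1) from by ring, rst_even]
  have h2 : Bc m p (j + 1) ≤ m := Bc_le m p (by omega)
  push_cast [h2]
  ring

private lemma rst_b_cases (m p k : ℕ) (hk : k ≤ p) :
    (Bc m p (k + 1) : ℤ) - Bc m p k = (m / (p + 1) : ℕ) ∨
    (Bc m p (k + 1) : ℤ) - Bc m p k = (m / (p + 1) : ℕ) + 1 := by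
  unfold Bc
  rcases lt_or_ge k (m % (p + 1)) with h | h
  · right
    rw [min_eq_left (by omega), min_eq_left (by omega)]
    push_cast
    ring
  · left
    rw [min_eq_right (by omega), min_eq_right (by omega)]
    push_cast
    ring

private lemma rst_b_sum (m p : ℕ) :
    ∑ k ∈ range (p + 1), ((Bc m p (k + 1) : ℤ) - Bc m p k) = m := by
  rw [Finset.sum_range_sub (fun k => (Bc m p k : ℤ))]
  rw [Bc_top]
  simp [Bc]

private lemma rst_val (m p : ℕ) :
    2 * Dm (2 * p) m (rst m p)
      = (2 * p + 1) * (m : ℤ) ^ 2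
        - ((2 * ((m / (p + 1) : ℕ) : ℤ) + 1) * m
            - (p + 1) * (((m / (p + 1) : ℕ) : ℤ) * (((m / (p + 1) : ℕ) : ℤ) + 1))) := by
  obtain ⟨h0, hN, hfs⟩ := rst_feas m p
  rw [Dm_split m p (rst m p) h0 hN]
  have hodd : ∑ j ∈ range p, ((m : ℤ) - rst m p (2 * j + 1) - rst m p (2 * j + 2)) ^ 2 = 0 := by
    apply Finset.sum_eq_zero
    intro j hj
    rw [rst_o m p j (mem_range.mp hj)]
    ring
  set q : ℤ := ((m / (p + 1) : ℕ) : ℤ) with hq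
  have heven : ∑ k ∈ range (p + 1), ((m : ℤ) - rst m p (2 * k) - rst m p (2 * k + 1)) ^ 2
      = (2 * q + 1) * m - (p + 1) * (q * (q + 1)) := by
    have hstep : ∀ k ∈ range (p + 1),
        ((m : ℤ) - rst m p (2 * k) - rst m p (2 * k + 1)) ^ 2
          = (2 * q + 1) * ((Bc m p (k + 1) : ℤ) - Bc m p k) - q * (q + 1) := by
      intro k hk
      have hk' : k ≤ p := by have := mem_range.mp hk; omega
      rw [rst_b m p k hk']
      rcases rst_b_cases m p k hk' with h | h <;> rw [h] <;> ring
    rw [Finset.sum_congr rfl hstep, Finset.sum_sub_distrib, ← Finset.mul_sum,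
      rst_b_sum, Finset.sum_const, card_range]
    push_cast
    ring
  rw [hodd, heven]
  ring

/-- For `n` even and `m > 0`, every maximizer of `Dm` over the feasible region has
even Betti numbers `β_{2k} = m - r_{2k} - r_{2k+1}` equal to `⌊m/(n/2+1)⌋` or
`⌈m/(n/2+1)⌉` for every `k ≤ n/2`. -/
theorem stmt19 (n m : ℕ) (hn : Even n) (hm : 0 < m) :
    ∀ r : ℕ → ℕ, feasm n m r →
      (∀ s : ℕ → ℕ, feasm n m s → Dm n m s ≤ Dm n m r) →
      ∀ k ≤ n / 2,
        (m : ℤ) - r (2 * k) - r (2 * k + 1) = (m / (n / 2 + 1) : ℕ) ∨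
        (m : ℤ) - r (2 * k) - r (2 * k + 1) = ((m + n / 2) / (n / 2 + 1) : ℕ) := by
  obtain ⟨p, rfl⟩ : ∃ p, n = 2 * p := by
    rcases hn with ⟨t, ht⟩; exact ⟨t, by omega⟩
  intro r hr hmax k hk
  obtain ⟨h0, hN, hfs⟩ := hr
  have hp2 : 2 * p / 2 = p := by omega
  rw [hp2] at hk ⊢
  set q : ℤ := ((m / (p + 1) : ℕ) : ℤ) with hq
  have hq0 : 0 ≤ q := Int.natCast_nonneg _
  -- decomposition of Dm at the maximizer
  have h1 := Dm_split m p r h0 hN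
  have h2 := rst_val m p
  have h3 : Dm (2 * p) m (rst m p) ≤ Dm (2 * p) m r :=
    hmax _ (show feasm (2 * p) m (rst m p) from rst_feas m p)
  have hkey : ∑ k ∈ range (p + 1), ((m : ℤ) - r (2 * k) - r (2 * k + 1)) ^ 2
      + ∑ j ∈ range p, ((m : ℤ) - r (2 * j + 1) - r (2 * j + 2)) ^ 2
      ≤ (2 * q + 1) * m - (p + 1) * (q * (q + 1)) := by
    rw [← hq] at h2
    linarith [h1, h2, h3]
  -- sum relation
  have h4 : (∑ k ∈ range (p + 1), ((m : ℤ) - r (2 * k) - r (2 * k + 1)))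
      - ∑ j ∈ range p, ((m : ℤ) - r (2 * j + 1) - r (2 * j + 2)) = m := by
    have := pair_sum (fun i => ((r i : ℕ) : ℤ)) m p
    beta_reduce at this
    rw [h0, hN] at this
    push_cast at this
    linarith [this]
  -- the two nonnegative sums
  have hEnn : ∀ i ∈ range (p + 1),
      (0 : ℤ) ≤ (((m : ℤ) - r (2 * i) - r (2 * i + 1)) - q)
        * (((m : ℤ) - r (2 * i) - r (2 * i + 1)) - q - 1) := by
    intro i _
    exact int_consec_nonneg _
  have hFnn : ∀ j ∈ range p,
      (0 : ℤ) ≤ ((m : ℤ) - r (2 * j + 1) - r (2 * j + 2))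
        * (((m : ℤ) - r (2 * j + 1) - r (2 * j + 2)) + (2 * q + 1)) := by
    intro j hj
    have hj' : 2 * j + 1 ≤ 2 * p := by have := mem_range.mp hj; omega
    have := hfs (2 * j + 1) hj'
    have ho : (0 : ℤ) ≤ (m : ℤ) - r (2 * j + 1) - r (2 * j + 1 + 1) := by
      push_cast; omega
    have ho2 : (0 : ℤ) ≤ (m : ℤ) - r (2 * j + 1) - r (2 * j + 2) := by
      have : (2:ℕ) * j + 1 + 1 = 2 * j + 2 := by ring
      rwa [this] at ho
    exact mul_nonneg ho2 (by linarith)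
  -- total of the two nonnegative sums is ≤ 0
  have hEF : (∑ i ∈ range (p + 1),
        ((((m : ℤ) - r (2 * i) - r (2 * i + 1)) - q)
          * (((m : ℤ) - r (2 * i) - r (2 * i + 1)) - q - 1)))
      + (∑ j ∈ range p,
        (((m : ℤ) - r (2 * j + 1) - r (2 * j + 2))
          * (((m : ℤ) - r (2 * j + 1) - r (2 * j + 2)) + (2 * q + 1)))) ≤ 0 := by
    have eE : ∀ i ∈ range (p + 1),
        ((((m : ℤ) - r (2 * i) - r (2 * i + 1)) - q)
          * (((m : ℤ) - r (2 * i) - r (2 * i + 1)) - q - 1))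
        = ((m : ℤ) - r (2 * i) - r (2 * i + 1)) ^ 2
          - (2 * q + 1) * ((m : ℤ) - r (2 * i) - r (2 * i + 1)) + q * (q + 1) := by
      intro i _; ring
    have eF : ∀ j ∈ range p,
        (((m : ℤ) - r (2 * j + 1) - r (2 * j + 2))
          * (((m : ℤ) - r (2 * j + 1) - r (2 * j + 2)) + (2 * q + 1)))
        = ((m : ℤ) - r (2 * j + 1) - r (2 * j + 2)) ^ 2
          + (2 * q + 1) * ((m : ℤ) - r (2 * j + 1) - r (2 * j + 2)) := by
      intro j _; ring
    have hmulb : (2 * q + 1) * (∑ i ∈ range (p + 1), ((m : ℤ) - r (2 * i) - r (2 * i + 1)))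
        = ∑ i ∈ range (p + 1), (2 * q + 1) * ((m : ℤ) - r (2 * i) - r (2 * i + 1)) :=
      Finset.mul_sum _ _ _
    have hmulo : (2 * q + 1) * (∑ j ∈ range p, ((m : ℤ) - r (2 * j + 1) - r (2 * j + 2)))
        = ∑ j ∈ range p, (2 * q + 1) * ((m : ℤ) - r (2 * j + 1) - r (2 * j + 2)) :=
      Finset.mul_sum _ _ _
    have hconst : ∑ _i ∈ range (p + 1), (q * (q + 1)) = ((p : ℤ) + 1) * (q * (q + 1)) := by
      rw [Finset.sum_const, card_range, nsmul_eq_mul]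
      push_cast
      ring
    have h4' : (2 * q + 1) * (∑ i ∈ range (p + 1), ((m : ℤ) - r (2 * i) - r (2 * i + 1)))
        - (2 * q + 1) * (∑ j ∈ range p, ((m : ℤ) - r (2 * j + 1) - r (2 * j + 2)))
        = (2 * q + 1) * m := by
      linear_combination (2 * q + 1) * h4
    rw [Finset.sum_congr rfl eE, Finset.sum_congr rfl eF,
      Finset.sum_add_distrib, Finset.sum_sub_distrib, Finset.sum_add_distrib]
    linarith [hkey, hmulb, hmulo, hconst, h4']
  have hE0 : ∀ i ∈ range (p + 1),
      ((((m : ℤ) - r (2 * i) - r (2 * i + 1)) - q)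
        * (((m : ℤ) - r (2 * i) - r (2 * i + 1)) - q - 1)) = 0 := by
    have hs1 := Finset.sum_nonneg hEnn
    have hs2 := Finset.sum_nonneg hFnn
    have : ∑ i ∈ range (p + 1),
        ((((m : ℤ) - r (2 * i) - r (2 * i + 1)) - q)
          * (((m : ℤ) - r (2 * i) - r (2 * i + 1)) - q - 1)) = 0 := le_antisymm (by linarith) hs1
    exact (Finset.sum_eq_zero_iff_of_nonneg hEnn).mp this
  have hF0 : ∀ j ∈ range p, ((m : ℤ) - r (2 * j + 1) - r (2 * j + 2)) = 0 := by
    have hs1 := Finset.sum_nonneg hEnn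
    have hs2 := Finset.sum_nonneg hFnn
    have hz : ∑ j ∈ range p,
        (((m : ℤ) - r (2 * j + 1) - r (2 * j + 2))
          * (((m : ℤ) - r (2 * j + 1) - r (2 * j + 2)) + (2 * q + 1))) = 0 :=
      le_antisymm (by linarith) hs2
    intro j hj
    have h := (Finset.sum_eq_zero_iff_of_nonneg hFnn).mp hz j hj
    rcases mul_eq_zero.mp h with h' | h'
    · exact h'
    · exfalso
      have hj' : 2 * j + 1 ≤ 2 * p := by have := mem_range.mp hj; omega
      have := hfs (2 * j + 1) hj'
      have ho2 : (0 : ℤ) ≤ (m : ℤ) - r (2 * j + 1) - r (2 * j + 2) := by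
        have h2' : r (2 * j + 1) + r (2 * j + 2) ≤ m := by
          have e : (2:ℕ) * j + 1 + 1 = 2 * j + 2 := by ring
          rwa [e] at this
        push_cast
        omega
      linarith
  -- each b_i is q or q+1
  have hbvals : ∀ i ∈ range (p + 1),
      ((m : ℤ) - r (2 * i) - r (2 * i + 1)) = q ∨
      ((m : ℤ) - r (2 * i) - r (2 * i + 1)) = q + 1 := by
    intro i hi
    rcases mul_eq_zero.mp (hE0 i hi) with h' | h'
    · left; linarith [h']
    · right; linarith [h']
  have hkmem : k ∈ range (p + 1) := mem_range.mpr (by omega)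
  rcases hbvals k hkmem with hbk | hbk
  · left; exact hbk
  · right
    -- show (m + p) / (p + 1) = m / (p + 1) + 1
    have hsumo : ∑ j ∈ range p, ((m : ℤ) - r (2 * j + 1) - r (2 * j + 2)) = 0 :=
      Finset.sum_eq_zero hF0
    have hsumb : ∑ i ∈ range (p + 1), ((m : ℤ) - r (2 * i) - r (2 * i + 1)) = m := by
      linarith [h4, hsumo]
    have hlt : (∑ _i ∈ range (p + 1), q) < ∑ i ∈ range (p + 1), ((m : ℤ) - r (2 * i) - r (2 * i + 1)) := by
      apply Finset.sum_lt_sum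
      · intro i hi
        rcases hbvals i hi with h' | h' <;> omega
      · exact ⟨k, hkmem, by rw [hbk]; omega⟩
    rw [Finset.sum_const, card_range, nsmul_eq_mul, hsumb] at hlt
    have hltn : (p + 1) * (m / (p + 1)) < m := by
      have : ((p : ℤ) + 1) * q < m := hlt
      rw [hq] at this
      exact_mod_cast this
    have hmod := Nat.div_add_mod m (p + 1)
    have ht1 : 1 ≤ m % (p + 1) := by linarith [hmod, hltn]
    have htp : m % (p + 1) < p + 1 := Nat.mod_lt _ (by omega)
    have hdiv : (m + p) / (p + 1) = m / (p + 1) + 1 := by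
      apply Nat.div_eq_of_lt_le
      · calc (m / (p + 1) + 1) * (p + 1)
            = (p + 1) * (m / (p + 1)) + (p + 1) := by ring
          _ ≤ m + p := by omega
      · calc m + p = (p + 1) * (m / (p + 1)) + m % (p + 1) + p := by omega
          _ < (m / (p + 1) + 1 + 1) * (p + 1) := by nlinarith [htp]
    rw [hdiv, Nat.cast_add, Nat.cast_one, ← hq]
    exact hbk
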